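/- Let G be a connected graph and let u, v ∈ V(G) be vertices with deg_G(u) ≠ deg_G(v). Then V(G) \ {u, v} is an outer multiset resolving set of G; in particular, dim_ms(G) ≤ n(G) - 2. -/

import Mathlib

open SimpleGraph

/-- The multiset representation of `u` with respect to `S`: the multiset of
distances from `u` to the vertices of `S`, counted with multiplicity. -/
noncomputable def mrep {V : Type*} (G : SimpleGraph V) (u : V) (S : Finset V) : Multiset ℕ :=
  S.val.map fun w => G.dist u w

/-- `S` is an outer multiset resolving set of `G`: the multiset representations of
the vertices outside `S` are pairwise distinct. -/
def IsOMR {V : Type*} (G : SimpleGraph V) (S : Finset V) : Prop :=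
  ∀ u ∉ S, ∀ v ∉ S, mrep G u S = mrep G v S → u = v

/-- The outer multiset dimension of `G`. -/
noncomputable def dimMS {V : Type*} (G : SimpleGraph V) [Fintype V] : ℕ :=
  sInf {n | ∃ S : Finset V, S.card = n ∧ IsOMR G S}

/-- The diameter of `G`: the largest distance between vertices of `G`. -/
noncomputable def gdiam {V : Type*} (G : SimpleGraph V) [Fintype V] : ℕ :=
  Finset.univ.sup fun p : V × V => G.dist p.1 p.2

lemma count_one_mrep {V : Type*} [Fintype V] [DecidableEq V] (G : SimpleGraph V)
    [DecidableRel G.Adj] (u v : V) :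
    Multiset.count 1 (mrep G u (Finset.univ \ {u, v})) =
      G.degree u - (if G.Adj u v then 1 else 0) := by
  classical
  rw [mrep, Multiset.count_map]
  have hfs : Multiset.filter (fun w => 1 = G.dist u w) (Finset.univ \ ({u, v} : Finset V)).val
      = (G.neighborFinset u \ {v}).val := by
    rw [← Finset.filter_val]
    congr 1
    ext w
    simp only [Finset.mem_filter, Finset.mem_sdiff, Finset.mem_univ, Finset.mem_insert,
      Finset.mem_singleton, mem_neighborFinset, true_and]
    constructor
    · rintro ⟨hw, hd⟩
      exact ⟨SimpleGraph.dist_eq_one_iff_adj.mp hd.symm, fun h => (hw (Or.inr h)).elim⟩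
    · rintro ⟨hadj, hne⟩
      refine ⟨fun h => ?_, (SimpleGraph.dist_eq_one_iff_adj.mpr hadj).symm⟩
      rcases h with h | h
      · exact G.loopless.irrefl u (h ▸ hadj)
      · exact hne h
  rw [hfs]
  have hcard : (G.neighborFinset u \ {v}).card =
      G.degree u - (if G.Adj u v then 1 else 0) := by
    rcases em (G.Adj u v) with h | h
    · have hsub : ({v} : Finset V) ⊆ G.neighborFinset u := by
        intro x hx
        simp only [Finset.mem_singleton] at hx
        subst hx
        simpa [mem_neighborFinset] using h
      rw [Finset.card_sdiff_of_subset hsub, if_pos h, Finset.card_singleton]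
      rfl
    · have hd : G.neighborFinset u \ {v} = G.neighborFinset u := by
        apply Finset.sdiff_eq_self_of_disjoint
        simp only [Finset.disjoint_singleton_right, mem_neighborFinset]
        exact h
      rw [hd, if_neg h, Nat.sub_zero]
      rfl
  exact hcard

theorem stmt_1 (V : Type*) [Fintype V] [DecidableEq V] (G : SimpleGraph V) [DecidableRel G.Adj]
    (hconn : G.Connected) (u v : V) (hdeg : G.degree u ≠ G.degree v) :
    IsOMR G (Finset.univ \ {u, v}) ∧ dimMS G ≤ Fintype.card V - 2 := by
  classical
  have huv : u ≠ v := fun h => hdeg (h ▸ rfl)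
  have hpair : ({v, u} : Finset V) = {u, v} := by
    ext x; simp [or_comm]
  have key : mrep G u (Finset.univ \ {u, v}) ≠ mrep G v (Finset.univ \ {u, v}) := by
    intro h
    have h1 := count_one_mrep G u v
    have h2 := count_one_mrep G v u
    rw [hpair] at h2
    have heq : (G.degree u - if G.Adj u v then 1 else 0)
        = G.degree v - if G.Adj v u then 1 else 0 := by
      rw [← h1, ← h2, h]
    by_cases hadj : G.Adj u v
    · have hdu : 1 ≤ G.degree u :=
        Finset.card_pos.mpr ⟨v, by simpa [mem_neighborFinset] using hadj⟩
      have hdv : 1 ≤ G.degree v :=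
        Finset.card_pos.mpr ⟨u, by simpa [mem_neighborFinset] using hadj.symm⟩
      rw [if_pos hadj, if_pos hadj.symm] at heq
      omega
    · rw [if_neg hadj, if_neg (fun h' => hadj h'.symm)] at heq
      omega
  have homr : IsOMR G (Finset.univ \ {u, v}) := by
    intro a ha b hb hab
    have hma : a = u ∨ a = v := by
      by_contra hc
      push_neg at hc
      exact ha (by simp [hc.1, hc.2])
    have hmb : b = u ∨ b = v := by
      by_contra hc
      push_neg at hc
      exact hb (by simp [hc.1, hc.2])
    rcases hma with rfl | rfl <;> rcases hmb with rfl | rfl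
    · rfl
    · exact absurd hab key
    · exact absurd hab.symm key
    · rfl
  refine ⟨homr, ?_⟩
  have hcard : (Finset.univ \ ({u, v} : Finset V)).card = Fintype.card V - 2 := by
    rw [Finset.card_sdiff_of_subset (Finset.subset_univ _), Finset.card_univ,
      Finset.card_pair huv]
  exact Nat.sInf_le ⟨_, hcard, homr⟩
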